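/- Let η be the 5×5 Fisher information matrix with entries (times 1/σ²): η₁₁ = N²/2, η₂₂ = N², η₃₃ = A²N²/2, η₃₄ = η₄₃ = η₃₅ = η₅₃ = πA²N²(N−1)/2, η₄₄ = η₅₅ = π²A²N²(N−1)(2N−1)/3, η₄₅ = η₅₄ = π²A²N²(N−1)²/2, and zero elsewhere. Then for N ≥ 2 and A, σ > 0, η is invertible and its inverse equals (σ²/N²) times the matrix with (1,1)-entry 2, (2,2)-entry 1, (3,3)-entry 2(7N−5)/(A²(N+1)), (3,4) = (4,3) = (3,5) = (5,3) = −6/(πA²(N+1)), (4,4) = (5,5) = 6/(π²A²(N²−1)), (4,5) = (5,4) = 0, and all other entries zero. -/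

import Mathlib

open Real Matrix

set_option maxHeartbeats 4000000 in
theorem stmt_12 (A σ : ℝ) (hA : 0 < A) (hσ : 0 < σ) (N : ℕ) (hN : 2 ≤ N)
    (η : Matrix (Fin 5) (Fin 5) ℝ)
    (hη : η = (σ^2)⁻¹ •
      !![(N:ℝ)^2/2, 0, 0, 0, 0;
         0, (N:ℝ)^2, 0, 0, 0;
         0, 0, A^2*(N:ℝ)^2/2, π*A^2*(N:ℝ)^2*((N:ℝ)-1)/2, π*A^2*(N:ℝ)^2*((N:ℝ)-1)/2;
         0, 0, π*A^2*(N:ℝ)^2*((N:ℝ)-1)/2, π^2*A^2*(N:ℝ)^2*((N:ℝ)-1)*(2*(N:ℝ)-1)/3,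
           π^2*A^2*(N:ℝ)^2*((N:ℝ)-1)^2/2;
         0, 0, π*A^2*(N:ℝ)^2*((N:ℝ)-1)/2, π^2*A^2*(N:ℝ)^2*((N:ℝ)-1)^2/2,
           π^2*A^2*(N:ℝ)^2*((N:ℝ)-1)*(2*(N:ℝ)-1)/3]) :
    IsUnit η.det ∧
    η⁻¹ = (σ^2/(N:ℝ)^2) •
      !![2, 0, 0, 0, 0;
         0, 1, 0, 0, 0;
         0, 0, 2*(7*(N:ℝ)-5)/(A^2*((N:ℝ)+1)), -6/(π*A^2*((N:ℝ)+1)), -6/(π*A^2*((N:ℝ)+1));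
         0, 0, -6/(π*A^2*((N:ℝ)+1)), 6/(π^2*A^2*((N:ℝ)^2-1)), 0;
         0, 0, -6/(π*A^2*((N:ℝ)+1)), 0, 6/(π^2*A^2*((N:ℝ)^2-1))] := by
  have hπ : π ≠ 0 := Real.pi_ne_zero
  have hA' : A ≠ 0 := hA.ne'
  have hσ' : σ ≠ 0 := hσ.ne'
  have hN1 : (1:ℝ) < (N:ℝ) := by exact_mod_cast lt_of_lt_of_le one_lt_two hN
  have hN0 : (N:ℝ) ≠ 0 := by positivity
  have hNm1 : (N:ℝ) - 1 ≠ 0 := by nlinarith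
  have hNp1 : (N:ℝ) + 1 ≠ 0 := by nlinarith
  have hN2 : (N:ℝ)^2 - 1 ≠ 0 := by nlinarith
  have key : η * ((σ^2/(N:ℝ)^2) •
      !![2, 0, 0, 0, 0;
         0, 1, 0, 0, 0;
         0, 0, 2*(7*(N:ℝ)-5)/(A^2*((N:ℝ)+1)), -6/(π*A^2*((N:ℝ)+1)), -6/(π*A^2*((N:ℝ)+1));
         0, 0, -6/(π*A^2*((N:ℝ)+1)), 6/(π^2*A^2*((N:ℝ)^2-1)), 0;
         0, 0, -6/(π*A^2*((N:ℝ)+1)), 0, 6/(π^2*A^2*((N:ℝ)^2-1))]) = 1 := by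
    subst hη
    rw [Matrix.smul_mul, Matrix.mul_smul, smul_smul]
    ext i j
    fin_cases i <;> fin_cases j
    all_goals simp [Matrix.mul_apply, Fin.sum_univ_five, Matrix.one_apply, Matrix.smul_apply,
        Matrix.vecHead, Matrix.vecTail]
    all_goals field_simp
    all_goals try ring
    all_goals (right; trivial)
  exact ⟨Matrix.isUnit_det_of_right_inverse key, Matrix.inv_eq_right_inv key⟩
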